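/- Let S be a nonempty finite set, q a probability distribution on S with q(s) > 0 for all s, v : S → ℝ, β ≥ 0, κ > 0 and ω ∈ ℝ. Define p(s) = q(s)·exp(−(v(s)−ω)/κ), and suppose ∑_{s∈S} p(s) = 1 and ∑_{s∈S} p(s)·(−(v(s)−ω)/κ) = β. Then ∑_{s∈S} p(s)·v(s) = ω − κ·β, and ω − κ·β ≤ ∑_{s∈S} p'(s)·v(s) for every probability distribution p' on S with D(p'‖q) ≤ β; that is, the minimum of the expected value over the KL ball of radius β around q equals ω − κ·β. -/

import Mathlib

/-- For the tilted distribution `p(s) = q(s)·exp(−(v(s)−ω)/κ)` (normalized,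
with KL divergence `β` from `q`), the expected value equals `ω − κ·β`, and `ω − κ·β`
lower-bounds the expected value over the whole KL ball of radius `β` around `q`. -/
theorem tilted_expected_value_eq_and_min_over_KL_ball
    {S : Type*} [Fintype S] [Nonempty S]
    (q : S → ℝ) (hq_pos : ∀ s, 0 < q s) (hq_sum : ∑ s, q s = 1)
    (v : S → ℝ) (β : ℝ) (hβ : 0 ≤ β) (κ : ℝ) (hκ : 0 < κ) (ω : ℝ)
    (p : S → ℝ) (hp_def : ∀ s, p s = q s * Real.exp (-(v s - ω) / κ))
    (hp_sum : ∑ s, p s = 1)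
    (hp_kl : ∑ s, p s * (-(v s - ω) / κ) = β) :
    (∑ s, p s * v s = ω - κ * β) ∧
      ∀ p' : S → ℝ, (∀ s, 0 ≤ p' s) → (∑ s, p' s = 1) →
        (∑ s, p' s * Real.log (p' s / q s) ≤ β) →
        ω - κ * β ≤ ∑ s, p' s * v s := by
  have hκ' : κ ≠ 0 := ne_of_gt hκ
  have hlog : ∀ s, Real.log (p s / q s) = -(v s - ω) / κ := by
    intro s
    rw [hp_def s, mul_comm, mul_div_assoc, div_self (hq_pos s).ne', mul_one, Real.log_exp]
  constructor
  · have h1 : ∀ s, p s * v s = p s * ω - κ * (p s * (-(v s - ω) / κ)) := by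
      intro s; field_simp; ring
    calc ∑ s, p s * v s = ∑ s, (p s * ω - κ * (p s * (-(v s - ω) / κ))) := by
          simp_rw [h1]
      _ = (∑ s, p s) * ω - κ * ∑ s, p s * (-(v s - ω) / κ) := by
          rw [Finset.sum_sub_distrib, ← Finset.sum_mul, Finset.mul_sum]
      _ = ω - κ * β := by rw [hp_sum, hp_kl, one_mul]
  · intro p' hp' hp'sum hp'kl
    have hp_pos : ∀ s, 0 < p s := fun s => by
      exact hp_def s ▸ mul_pos (hq_pos s) (Real.exp_pos _)
    have key : ∀ s, p' s * Real.log (p s / q s) ≤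
        p' s * Real.log (p' s / q s) + (p s - p' s) := by
      intro s
      rcases eq_or_lt_of_le (hp' s) with h | h
      · rw [← h]; simpa using (hp_pos s).le
      · have hratio : Real.log (p s / q s) - Real.log (p' s / q s)
            = Real.log (p s / p' s) := by
          rw [← Real.log_div (div_pos (hp_pos s) (hq_pos s)).ne'
            (div_pos h (hq_pos s)).ne']
          congr 1
          have h1 := (hq_pos s).ne'
          have h2 := h.ne'
          field_simp
        have hle : Real.log (p s / p' s) ≤ p s / p' s - 1 :=
          Real.log_le_sub_one_of_pos (div_pos (hp_pos s) h)
        have := mul_le_mul_of_nonneg_left hle h.le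
        rw [mul_sub, mul_div_cancel₀ _ h.ne'] at this
        nlinarith [this, hratio]
    have hsum : ∑ s, p' s * Real.log (p s / q s) ≤ β := by
      calc ∑ s, p' s * Real.log (p s / q s)
          ≤ ∑ s, (p' s * Real.log (p' s / q s) + (p s - p' s)) :=
            Finset.sum_le_sum fun s _ => key s
        _ = (∑ s, p' s * Real.log (p' s / q s)) + ((∑ s, p s) - ∑ s, p' s) := by
            rw [Finset.sum_add_distrib, Finset.sum_sub_distrib]
        _ ≤ β := by rw [hp_sum, hp'sum]; linarith
    have hv : ∀ s, v s = ω - κ * Real.log (p s / q s) := by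
      intro s; rw [hlog s]; field_simp; ring
    calc ω - κ * β ≤ ω - κ * ∑ s, p' s * Real.log (p s / q s) := by
          nlinarith
      _ = ∑ s, p' s * v s := by
          simp_rw [hv, mul_sub]
          rw [Finset.sum_sub_distrib, ← Finset.sum_mul, hp'sum, one_mul,
            Finset.mul_sum]
          congr 1
          exact Finset.sum_congr rfl fun s _ => by ring
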